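/- arXiv:2408.03279 — 6 statements merged into one kernel-verified Lean document; each statement's English description precedes it below -/
import Mathlib

section
/- Let γ : ℝ → ℝ² be a twice continuously differentiable curve with ‖γ'(s)‖ = 1 for all s, let ℓ : ℝ → ℝ be continuously differentiable, and define the potential V(p) = ∫₀^p q ℓ'(q) dq. For a point X ∈ ℝ² set p_X(s) = ⟪γ(s) − X, γ'(s)⟫ / ‖γ(s) − X‖ whenever γ(s) ≠ X. Fix points A, B ∈ ℝ² and define f_{A,B}(s) = ‖A − γ(s)‖ + V(p_A(s)) + ‖γ(s + ℓ(p_A(s))) − B‖. Then at every s₀ with γ(s₀) ≠ A and γ(s₀ + ℓ(p_A(s₀))) ≠ B, f_{A,B} is differentiable and f_{A,B}'(s₀) = (p_A(s₀) + p_B(s₀ + ℓ(p_A(s₀)))) · (1 + ℓ'(p_A(s₀)) · p_A'(s₀)). In particular, if s₀ is a critical point of f_{A,B} at which 1 + ℓ'(p_A(s₀)) p_A'(s₀) ≠ 0, then p_A(s₀) + p_B(s₀ + ℓ(p_A(s₀))) = 0, which is the pensive billiard reflection law (equality of the angles of incidence and reflection). -/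
open Real intervalIntegral

lemma hasDerivAt_norm_aux {E : Type*} [NormedAddCommGroup E] [InnerProductSpace ℝ E]
    {u : ℝ → E} {v : E} {t : ℝ} (hu : HasDerivAt u v t) (hne : u t ≠ 0) :
    HasDerivAt (fun s => ‖u s‖) ((inner ℝ (u t) v : ℝ) / ‖u t‖) t := by
  have hi : HasDerivAt (fun s => (inner ℝ (u s) (u s) : ℝ))
      ((inner ℝ (u t) v : ℝ) + (inner ℝ v (u t) : ℝ)) t := hu.inner ℝ hu
  have hnorm : ‖u t‖ ≠ 0 := norm_ne_zero_iff.mpr hne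
  have hnz : (inner ℝ (u t) (u t) : ℝ) ≠ 0 := by
    rw [real_inner_self_eq_norm_sq]; positivity
  have hs := hi.sqrt hnz
  have heq : (fun s => Real.sqrt (inner ℝ (u s) (u s) : ℝ)) = fun s => ‖u s‖ := by
    funext s; rw [real_inner_self_eq_norm_sq, Real.sqrt_sq (norm_nonneg _)]
  rw [heq] at hs
  convert hs using 1
  rw [real_inner_self_eq_norm_sq, Real.sqrt_sq (norm_nonneg _), real_inner_comm v (u t)]
  field_simp; ring

/-- Variational principle for pensive billiards: with `p_X(s) = ⟪γ s − X, γ' s⟫/‖γ s − X‖`,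
the potential `V(p) = ∫₀^p q ℓ'(q) dq` and
`f(s) = ‖A − γ s‖ + V (p_A s) + ‖γ(s + ℓ(p_A s)) − B‖`, the derivative of `f` at `s₀` is
`(p_A s₀ + p_B (s₀ + ℓ (p_A s₀))) · (1 + ℓ'(p_A s₀) · p_A'(s₀))`; in particular, at a
critical point where the second factor is nonzero, the pensive billiard reflection law
`p_A s₀ + p_B (s₀ + ℓ (p_A s₀)) = 0` holds. -/
theorem pensive_billiard_variational_principle
    (γ : ℝ → EuclideanSpace ℝ (Fin 2)) (hγ : ContDiff ℝ 2 γ)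
    (hunit : ∀ s, ‖deriv γ s‖ = 1)
    (ℓ : ℝ → ℝ) (hℓ : ContDiff ℝ 1 ℓ)
    (V : ℝ → ℝ) (hV : ∀ p, V p = ∫ q in (0:ℝ)..p, q * deriv ℓ q)
    (pX : EuclideanSpace ℝ (Fin 2) → ℝ → ℝ)
    (hpX : ∀ X s, pX X s = (inner ℝ (γ s - X) (deriv γ s) : ℝ) / ‖γ s - X‖)
    (A B : EuclideanSpace ℝ (Fin 2))
    (f : ℝ → ℝ)
    (hf : ∀ s, f s = ‖A - γ s‖ + V (pX A s) + ‖γ (s + ℓ (pX A s)) - B‖)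
    (s₀ : ℝ) (hA : γ s₀ ≠ A) (hB : γ (s₀ + ℓ (pX A s₀)) ≠ B) :
    HasDerivAt f
      ((pX A s₀ + pX B (s₀ + ℓ (pX A s₀))) *
        (1 + deriv ℓ (pX A s₀) * deriv (pX A) s₀)) s₀ ∧
    (deriv f s₀ = 0 → 1 + deriv ℓ (pX A s₀) * deriv (pX A) s₀ ≠ 0 →
      pX A s₀ + pX B (s₀ + ℓ (pX A s₀)) = 0) := by
  have hγd : Differentiable ℝ γ := hγ.differentiable two_ne_zero
  have hγ'1 : ContDiff ℝ 1 (deriv γ) := by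
    have h2 : ContDiff ℝ ((1 : ℕ) + 1) γ := by exact_mod_cast hγ
    exact (contDiff_succ_iff_deriv.mp h2).2.2
  have hγ'd : Differentiable ℝ (deriv γ) := hγ'1.differentiable one_ne_zero
  have hℓd : Differentiable ℝ ℓ := hℓ.differentiable one_ne_zero
  -- differentiability of pX A at s₀
  have hpAdiff : DifferentiableAt ℝ (pX A) s₀ := by
    have : pX A = fun s => (inner ℝ (γ s - A) (deriv γ s) : ℝ) / ‖γ s - A‖ := funext (hpX A)
    rw [this]
    exact DifferentiableAt.div
      (((hγd s₀).sub_const A).inner ℝ (hγ'd s₀))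
      (((hγd s₀).sub_const A).norm ℝ (sub_ne_zero.mpr hA))
      (norm_ne_zero_iff.mpr (sub_ne_zero.mpr hA))
  have hpA : HasDerivAt (pX A) (deriv (pX A) s₀) s₀ := hpAdiff.hasDerivAt
  set pA : ℝ := pX A s₀ with hpAdef
  set pA' : ℝ := deriv (pX A) s₀ with hpA'def
  set t₀ : ℝ := s₀ + ℓ pA with ht₀def
  -- Term 1
  have h1 : HasDerivAt (fun s => ‖A - γ s‖) pA s₀ := by
    have heq : (fun s => ‖A - γ s‖) = fun s => ‖γ s - A‖ := by
      funext s; rw [norm_sub_rev]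
    rw [heq]
    have := hasDerivAt_norm_aux ((hγd s₀).hasDerivAt.sub_const A) (sub_ne_zero.mpr hA)
    rwa [hpAdef, hpX A s₀]
  -- Term 2
  have hgc : Continuous (fun q : ℝ => q * deriv ℓ q) :=
    continuous_id.mul (hℓ.continuous_deriv le_rfl)
  have hVd : HasDerivAt V (pA * deriv ℓ pA) pA := by
    have : V = fun p => ∫ q in (0:ℝ)..p, q * deriv ℓ q := funext hV
    rw [this]
    exact intervalIntegral.integral_hasDerivAt_right
      (hgc.intervalIntegrable _ _)
      (hgc.stronglyMeasurable.stronglyMeasurableAtFilter)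
      hgc.continuousAt
  have h2 : HasDerivAt (fun s => V (pX A s)) (pA * deriv ℓ pA * pA') s₀ := hVd.comp s₀ hpA
  -- Term 3
  have hℓatpA : HasDerivAt ℓ (deriv ℓ pA) pA := (hℓd pA).hasDerivAt
  have hgd : HasDerivAt (fun s => s + ℓ (pX A s)) (1 + deriv ℓ pA * pA') s₀ :=
    (hasDerivAt_id s₀).add (hℓatpA.comp s₀ hpA)
  have hout : HasDerivAt (fun t => ‖γ t - B‖) (pX B t₀) t₀ := by
    have := hasDerivAt_norm_aux ((hγd t₀).hasDerivAt.sub_const B) (sub_ne_zero.mpr hB)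
    rwa [hpX B t₀]
  have h3 : HasDerivAt (fun s => ‖γ (s + ℓ (pX A s)) - B‖)
      (pX B t₀ * (1 + deriv ℓ pA * pA')) s₀ := HasDerivAt.comp (h₂ := fun t => ‖γ t - B‖) s₀ hout hgd
  -- Sum
  have hfeq : f = fun s => ‖A - γ s‖ + V (pX A s) + ‖γ (s + ℓ (pX A s)) - B‖ := funext hf
  have htot : HasDerivAt f ((pA + pX B t₀) * (1 + deriv ℓ pA * pA')) s₀ := by
    rw [hfeq]
    have : HasDerivAt (fun s => ‖A - γ s‖ + V (pX A s) + ‖γ (s + ℓ (pX A s)) - B‖) _ s₀ :=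
      (h1.add h2).add h3
    convert this using 1
    ring
  refine ⟨htot, fun h0 hne => ?_⟩
  rw [htot.deriv] at h0
  rcases mul_eq_zero.mp h0 with h | h
  · exact h
  · exact absurd h hne
end

section
/- Let r and R be real numbers with 0 < R/2 < r < R, let Θ ∈ (0, π), let κ ∈ [1/R, 1/r], and let d be a real number with 2r·sin Θ ≤ d ≤ 2R·sin Θ. Then: (a) for every real t with t > −2r/(2(R/r) − 1), one has d + t(κd − sin Θ) > 0; and (b) for every real t with t < −2R/(2(r/R) − 1), one has d + t(κd − sin Θ) < 0. -/
open Real Set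

/-- The analytic core of the twist theorem for pensive billiards: if
`0 < R/2 < r < R`, `Θ ∈ (0, π)`, `κ ∈ [1/R, 1/r]` and `2r sin Θ ≤ d ≤ 2R sin Θ`, then
(a) `d + t(κd − sin Θ) > 0` for every `t > −2r/(2(R/r) − 1)`, and
(b) `d + t(κd − sin Θ) < 0` for every `t < −2R/(2(r/R) − 1)`. -/
theorem twist_inequality (r R Θ κ d : ℝ)
    (h1 : 0 < R / 2) (h2 : R / 2 < r) (h3 : r < R)
    (hΘ : Θ ∈ Set.Ioo 0 Real.pi)
    (hκ : κ ∈ Set.Icc (1 / R) (1 / r))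
    (hd1 : 2 * r * Real.sin Θ ≤ d) (hd2 : d ≤ 2 * R * Real.sin Θ) :
    (∀ t : ℝ, -(2 * r) / (2 * (R / r) - 1) < t → 0 < d + t * (κ * d - Real.sin Θ)) ∧
    (∀ t : ℝ, t < -(2 * R) / (2 * (r / R) - 1) → d + t * (κ * d - Real.sin Θ) < 0) := by
  obtain ⟨hκ1, hκ2⟩ := hκ
  obtain ⟨hΘ1, hΘ2⟩ := hΘ
  have hs : 0 < Real.sin Θ := Real.sin_pos_of_pos_of_lt_pi hΘ1 hΘ2
  have hR : 0 < R := by linarith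
  have hr : 0 < r := by linarith
  have hd0 : 0 < d := lt_of_lt_of_le (by positivity) hd1
  have hκ0 : 0 < κ := lt_of_lt_of_le (by positivity) hκ1
  -- lower bound on κ d - sin Θ
  have hlow : (2 * r / R - 1) * Real.sin Θ ≤ κ * d - Real.sin Θ := by
    have h : (1 / R) * (2 * r * Real.sin Θ) ≤ κ * d :=
      mul_le_mul hκ1 hd1 (by positivity) hκ0.le
    have : (1 / R) * (2 * r * Real.sin Θ) = (2 * r / R) * Real.sin Θ := by ring
    nlinarith [h]
  have hhigh : κ * d - Real.sin Θ ≤ (2 * R / r - 1) * Real.sin Θ := by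
    have h : κ * d ≤ (1 / r) * (2 * R * Real.sin Θ) :=
      mul_le_mul hκ2 hd2 hd0.le (by positivity)
    have h' : (1 / r) * (2 * R * Real.sin Θ) = (2 * R / r) * Real.sin Θ := by ring
    nlinarith [h, h']
  have hApos : 0 < κ * d - Real.sin Θ := by
    have : 0 < (2 * r / R - 1) * Real.sin Θ := by
      apply mul_pos _ hs
      have : 1 < 2 * r / R := by rw [lt_div_iff₀ hR]; linarith
      linarith
    linarith
  have hM : 0 < 2 * (R / r) - 1 := by
    have : 1 < R / r := (one_lt_div hr).mpr h3
    linarith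
  have hM' : 0 < 2 * (r / R) - 1 := by
    have : (1:ℝ)/2 < r / R := by rw [div_lt_div_iff₀ (by norm_num) hR]; linarith
    linarith
  constructor
  · intro t ht
    have ht' : -(2 * r) < t * (2 * (R / r) - 1) := (div_lt_iff₀ hM).mp ht
    rcases le_or_gt 0 t with h0 | h0
    · nlinarith [mul_nonneg h0 hApos.le]
    · -- t < 0 : t * (κd - s) ≥ t * ((2R/r - 1) s)
      have hstep : t * ((2 * R / r - 1) * Real.sin Θ) ≤ t * (κ * d - Real.sin Θ) :=
        mul_le_mul_of_nonpos_left hhigh h0.le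
      have h2Rr : (2 * R / r - 1) = (2 * (R / r) - 1) := by ring
      have hlt : -(2 * r) * Real.sin Θ < t * (2 * (R / r) - 1) * Real.sin Θ :=
        (mul_lt_mul_iff_of_pos_right hs).mpr ht'
      have heq : t * ((2 * R / r - 1) * Real.sin Θ) = t * (2 * (R / r) - 1) * Real.sin Θ := by
        ring
      linarith [hstep, hlt, hd1]
  · intro t ht
    have ht' : t * (2 * (r / R) - 1) < -(2 * R) := (lt_div_iff₀ hM').mp ht
    have ht0 : t < 0 := by
      have hpos : 0 < (2 * R) / (2 * (r / R) - 1) := by positivity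
      rw [neg_div] at ht
      linarith
    have hstep : t * (κ * d - Real.sin Θ) ≤ t * ((2 * r / R - 1) * Real.sin Θ) :=
      mul_le_mul_of_nonpos_left hlow ht0.le
    have hlt : t * (2 * (r / R) - 1) * Real.sin Θ < -(2 * R) * Real.sin Θ :=
      (mul_lt_mul_iff_of_pos_right hs).mpr ht'
    have heq : t * ((2 * r / R - 1) * Real.sin Θ) = t * (2 * (r / R) - 1) * Real.sin Θ := by
      ring
    linarith [hstep, hlt, hd2]
end

section
/- Let f : [0, 1] → ℝ be continuous with f(y) ≥ 1 for all y ∈ [0, 1]. For p ∈ (−1, 1) define ℓ(p) = ∫₀¹ (p/f(y)) · (1 − p²/f(y))^{−1/2} dy and V(p) = ∫₀¹ (1 − p²/f(y))^{−1/2} dy. Then for every p ∈ (−1, 1): p·ℓ(p) − ∫₀^p ℓ(q) dq = V(p) − 1, i.e. V(p) − V(0) = ∫₀^p q ℓ'(q) dq, so V is (up to the additive constant V(0) = 1) the potential of the delay function ℓ. -/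
open Real intervalIntegral MeasureTheory Set

/-! Auxiliary lemmas for the generalized puck billiard potential. -/

private lemma puck_pos {c q : ℝ} (hc : 1 ≤ c) (hq : |q| < 1) : 0 < 1 - q ^ 2 / c := by
  have h1 : q ^ 2 < 1 := by nlinarith [sq_abs q, abs_nonneg q]
  have h2 : q ^ 2 / c ≤ q ^ 2 := div_le_self (sq_nonneg q) hc
  linarith

private lemma puck_lb {c q r : ℝ} (hc : 1 ≤ c) (hq : |q| ≤ r) :
    1 - r ^ 2 ≤ 1 - q ^ 2 / c := by
  have h1 : q ^ 2 ≤ r ^ 2 := by nlinarith [sq_abs q, abs_nonneg q]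
  have h2 : q ^ 2 / c ≤ q ^ 2 := div_le_self (sq_nonneg q) hc
  linarith

private lemma puck_du {c : ℝ} (q : ℝ) :
    HasDerivAt (fun q : ℝ => 1 - q ^ 2 / c) (-(2 * q) / c) q := by
  have h := ((hasDerivAt_pow 2 q).div_const c).const_sub 1
  refine h.congr_deriv ?_
  simp [pow_one]
  ring

/-- derivative of the `V`-integrand. -/
private lemma puck_dA {c q : ℝ} (hc : 1 ≤ c) (hq : |q| < 1) :
    HasDerivAt (fun q : ℝ => (1 - q ^ 2 / c) ^ (-(1/2) : ℝ))
      ((q / c) * (1 - q ^ 2 / c) ^ (-(3/2) : ℝ)) q := by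
  have hu : 0 < 1 - q ^ 2 / c := puck_pos hc hq
  have h := (puck_du (c := c) q).rpow_const (p := (-(1/2) : ℝ)) (Or.inl hu.ne')
  convert h using 1
  rw [show ((-(1/2) : ℝ) - 1) = (-(3/2) : ℝ) by norm_num]
  ring

/-- derivative of the `ℓ`-integrand. -/
private lemma puck_dB {c q : ℝ} (hc : 1 ≤ c) (hq : |q| < 1) :
    HasDerivAt (fun q : ℝ => (q / c) * (1 - q ^ 2 / c) ^ (-(1/2) : ℝ))
      ((1 / c) * (1 - q ^ 2 / c) ^ (-(3/2) : ℝ)) q := by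
  have hu : 0 < 1 - q ^ 2 / c := puck_pos hc hq
  have hc0 : c ≠ 0 := by positivity
  have h1 : HasDerivAt (fun q : ℝ => q / c) (1 / c) q := (hasDerivAt_id q).div_const c
  have h := h1.mul (puck_dA hc hq)
  refine h.congr_deriv ?_
  have hsplit : (1 - q ^ 2 / c) ^ (-(1/2) : ℝ)
      = (1 - q ^ 2 / c) * (1 - q ^ 2 / c) ^ (-(3/2) : ℝ) := by
    have h2 := Real.rpow_add hu 1 (-(3/2) : ℝ)
    rw [Real.rpow_one] at h2
    rw [show (-(1/2) : ℝ) = 1 + -(3/2) by norm_num, h2]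
  rw [hsplit]
  field_simp
  ring

/-- derivative of the integrand of `D = ℓ'`. -/
private lemma puck_dC {c q : ℝ} (hc : 1 ≤ c) (hq : |q| < 1) :
    HasDerivAt (fun q : ℝ => (1 / c) * (1 - q ^ 2 / c) ^ (-(3/2) : ℝ))
      ((3 * q / c ^ 2) * (1 - q ^ 2 / c) ^ (-(5/2) : ℝ)) q := by
  have hu : 0 < 1 - q ^ 2 / c := puck_pos hc hq
  have h := ((puck_du (c := c) q).rpow_const (p := (-(3/2) : ℝ)) (Or.inl hu.ne')).const_mul
    (1 / c)
  refine h.congr_deriv ?_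
  rw [show ((-(3/2) : ℝ) - 1) = (-(5/2) : ℝ) by norm_num]
  field_simp

private lemma puck_cont (f : ℝ → ℝ) (hf : ContinuousOn f (Set.Icc 0 1))
    (hf1 : ∀ y ∈ Set.Icc (0:ℝ) 1, 1 ≤ f y) {q : ℝ} (hq : |q| < 1) (e : ℝ) :
    ContinuousOn (fun y => (1 - q ^ 2 / f y) ^ (e : ℝ)) (Set.Icc 0 1) := by
  have hfne : ∀ y ∈ Set.Icc (0:ℝ) 1, f y ≠ 0 := fun y hy => by
    have := hf1 y hy; positivity
  exact (continuousOn_const.sub (continuousOn_const.div hf hfne)).rpow_const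
    (fun y hy => Or.inl (puck_pos (hf1 y hy) hq).ne')

private lemma puck_cont_div (f : ℝ → ℝ) (hf : ContinuousOn f (Set.Icc 0 1))
    (hf1 : ∀ y ∈ Set.Icc (0:ℝ) 1, 1 ≤ f y) (a : ℝ) (n : ℕ) :
    ContinuousOn (fun y => a / (f y) ^ n) (Set.Icc 0 1) := by
  have hfne : ∀ y ∈ Set.Icc (0:ℝ) 1, (f y) ^ n ≠ 0 := fun y hy => by
    have := hf1 y hy; positivity
  exact continuousOn_const.div (hf.pow n) hfne

/-- Differentiation under the interval integral, specialized to `[0,1]` with a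
constant dominating bound. -/
private lemma puck_param_deriv (F F' : ℝ → ℝ → ℝ) (q₀ ε M : ℝ) (hε : 0 < ε)
    (hcont : ∀ q ∈ Metric.ball q₀ ε, ContinuousOn (fun y => F q y) (Set.Icc 0 1))
    (hcont' : ContinuousOn (fun y => F' q₀ y) (Set.Icc 0 1))
    (hbound : ∀ y ∈ Set.Ioc (0:ℝ) 1, ∀ q ∈ Metric.ball q₀ ε, |F' q y| ≤ M)
    (hdiff : ∀ y ∈ Set.Ioc (0:ℝ) 1, ∀ q ∈ Metric.ball q₀ ε,
      HasDerivAt (fun q => F q y) (F' q y) q) :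
    HasDerivAt (fun q => ∫ y in (0:ℝ)..1, F q y) (∫ y in (0:ℝ)..1, F' q₀ y) q₀ := by
  have hI : Set.uIoc (0:ℝ) 1 = Set.Ioc 0 1 := Set.uIoc_of_le zero_le_one
  have hIc : Set.uIcc (0:ℝ) 1 = Set.Icc 0 1 := Set.uIcc_of_le zero_le_one
  have hmeas : ∀ q ∈ Metric.ball q₀ ε,
      AEStronglyMeasurable (F q) ((volume : Measure ℝ).restrict (Set.uIoc 0 1)) := by
    intro q hq
    rw [hI]
    exact ((hcont q hq).mono Set.Ioc_subset_Icc_self).aestronglyMeasurable measurableSet_Ioc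
  refine (intervalIntegral.hasDerivAt_integral_of_dominated_loc_of_deriv_le
    (F := F) (F' := F') (bound := fun _ => M) (Metric.ball_mem_nhds q₀ hε) ?_ ?_ ?_ ?_ ?_ ?_).2
  · exact Filter.eventually_of_mem (Metric.ball_mem_nhds q₀ hε) hmeas
  · have := (hcont q₀ (Metric.mem_ball_self hε))
    rw [← hIc] at this
    exact this.intervalIntegrable
  · rw [hI]
    exact ((hcont'.mono Set.Ioc_subset_Icc_self)).aestronglyMeasurable measurableSet_Ioc
  · refine Filter.Eventually.of_forall (fun y hy q hq => ?_)
    rw [hI] at hy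
    rw [Real.norm_eq_abs]
    exact hbound y hy q hq
  · exact intervalIntegrable_const
  · refine Filter.Eventually.of_forall (fun y hy q hq => ?_)
    rw [hI] at hy
    exact hdiff y hy q hq

private lemma puck_ball_abs {q₀ ε r q : ℝ} (hr : r = (1 + |q₀|) / 2)
    (hεr : ε = (1 - |q₀|) / 2) (hq : q ∈ Metric.ball q₀ ε) : |q| < r := by
  have hd : |q - q₀| < ε := by
    rw [Metric.mem_ball, Real.dist_eq] at hq; exact hq
  have := abs_sub_abs_le_abs_sub q q₀
  rw [hr, hεr] at *
  linarith

section main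

variable (f : ℝ → ℝ) (hf : ContinuousOn f (Set.Icc 0 1))
  (hf1 : ∀ y ∈ Set.Icc (0:ℝ) 1, 1 ≤ f y)

private lemma puck_bound_aux {c q r e : ℝ} (hc : 1 ≤ c) (hq : |q| ≤ r) (hr : r < 1)
    (hr0 : 0 ≤ r) (he : e ≤ 0) :
    (1 - q ^ 2 / c) ^ (e : ℝ) ≤ (1 - r ^ 2) ^ (e : ℝ) := by
  have hr2 : 0 < 1 - r ^ 2 := by nlinarith
  exact Real.rpow_le_rpow_of_nonpos hr2 (puck_lb hc hq) he

include hf hf1 in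
private lemma puck_derivL (q₀ : ℝ) (hq₀ : |q₀| < 1) :
    HasDerivAt (fun q => ∫ y in (0:ℝ)..1, (q / f y) * (1 - q ^ 2 / f y) ^ (-(1/2) : ℝ))
      (∫ y in (0:ℝ)..1, (1 / f y) * (1 - q₀ ^ 2 / f y) ^ (-(3/2) : ℝ)) q₀ := by
  set ε := (1 - |q₀|) / 2 with hεdef
  set r := (1 + |q₀|) / 2 with hrdef
  have hε : 0 < ε := by rw [hεdef]; linarith
  have hr1 : r < 1 := by rw [hrdef]; linarith
  have hr0 : 0 ≤ r := by rw [hrdef]; positivity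
  have hball : ∀ q ∈ Metric.ball q₀ ε, |q| < r := fun q hq => puck_ball_abs hrdef hεdef hq
  refine puck_param_deriv (fun q y => (q / f y) * (1 - q ^ 2 / f y) ^ (-(1/2) : ℝ))
    (fun q y => (1 / f y) * (1 - q ^ 2 / f y) ^ (-(3/2) : ℝ)) q₀ ε
    ((1 - r ^ 2) ^ (-(3/2) : ℝ)) hε ?_ ?_ ?_ ?_
  · intro q hq
    have hq1 : |q| < 1 := lt_trans (hball q hq) hr1
    have hfne : ∀ y ∈ Set.Icc (0:ℝ) 1, f y ≠ 0 := fun y hy => by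
      have := hf1 y hy; positivity
    exact (continuousOn_const.div hf hfne).mul (puck_cont f hf hf1 hq1 _)
  · exact (puck_cont_div f hf hf1 1 1).congr (fun y _ => by simp [pow_one]) |>.mul
      (puck_cont f hf hf1 hq₀ _)
  · intro y hy q hq
    have hc := hf1 y (Set.Ioc_subset_Icc_self hy)
    have hq1 : |q| < 1 := lt_trans (hball q hq) hr1
    have hu : 0 < 1 - q ^ 2 / f y := puck_pos hc hq1
    have h1 : |(1 / f y) * (1 - q ^ 2 / f y) ^ (-(3/2) : ℝ)|
        = (1 / f y) * (1 - q ^ 2 / f y) ^ (-(3/2) : ℝ) := by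
      have hc0 : (0:ℝ) < f y := by linarith
      refine abs_of_nonneg ?_
      have := Real.rpow_nonneg hu.le (-(3/2) : ℝ)
      positivity
    rw [h1]
    have h2 : (1 - q ^ 2 / f y) ^ (-(3/2) : ℝ) ≤ (1 - r ^ 2) ^ (-(3/2) : ℝ) :=
      puck_bound_aux hc (hball q hq).le hr1 hr0 (by norm_num)
    have h3 : (1 : ℝ) / f y ≤ 1 := by
      rw [div_le_one (by linarith)]; exact hc
    have h4 : (0:ℝ) ≤ (1 - q ^ 2 / f y) ^ (-(3/2) : ℝ) := Real.rpow_nonneg hu.le _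
    have h5 : (0:ℝ) ≤ 1 / f y := by positivity
    calc (1 / f y) * (1 - q ^ 2 / f y) ^ (-(3/2) : ℝ)
        ≤ 1 * (1 - r ^ 2) ^ (-(3/2) : ℝ) := mul_le_mul h3 h2 h4 one_pos.le
      _ = (1 - r ^ 2) ^ (-(3/2) : ℝ) := one_mul _
  · intro y hy q hq
    have hc := hf1 y (Set.Ioc_subset_Icc_self hy)
    exact puck_dB hc (lt_trans (hball q hq) hr1)

include hf hf1 in
private lemma puck_derivV (q₀ : ℝ) (hq₀ : |q₀| < 1) :
    HasDerivAt (fun q => ∫ y in (0:ℝ)..1, (1 - q ^ 2 / f y) ^ (-(1/2) : ℝ))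
      (∫ y in (0:ℝ)..1, (q₀ / f y) * (1 - q₀ ^ 2 / f y) ^ (-(3/2) : ℝ)) q₀ := by
  set ε := (1 - |q₀|) / 2 with hεdef
  set r := (1 + |q₀|) / 2 with hrdef
  have hε : 0 < ε := by rw [hεdef]; linarith
  have hr1 : r < 1 := by rw [hrdef]; linarith
  have hr0 : 0 ≤ r := by rw [hrdef]; positivity
  have hball : ∀ q ∈ Metric.ball q₀ ε, |q| < r := fun q hq => puck_ball_abs hrdef hεdef hq
  refine puck_param_deriv (fun q y => (1 - q ^ 2 / f y) ^ (-(1/2) : ℝ))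
    (fun q y => (q / f y) * (1 - q ^ 2 / f y) ^ (-(3/2) : ℝ)) q₀ ε
    ((1 - r ^ 2) ^ (-(3/2) : ℝ)) hε ?_ ?_ ?_ ?_
  · intro q hq
    exact puck_cont f hf hf1 (lt_trans (hball q hq) hr1) _
  · have hfne : ∀ y ∈ Set.Icc (0:ℝ) 1, f y ≠ 0 := fun y hy => by
      have := hf1 y hy; positivity
    exact (continuousOn_const.div hf hfne).mul (puck_cont f hf hf1 hq₀ _)
  · intro y hy q hq
    have hc := hf1 y (Set.Ioc_subset_Icc_self hy)
    have hq1 : |q| < 1 := lt_trans (hball q hq) hr1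
    have hu : 0 < 1 - q ^ 2 / f y := puck_pos hc hq1
    have hc0 : (0:ℝ) < f y := by linarith
    have h4 : (0:ℝ) ≤ (1 - q ^ 2 / f y) ^ (-(3/2) : ℝ) := Real.rpow_nonneg hu.le _
    rw [abs_mul, abs_of_nonneg h4]
    have h3 : |q / f y| ≤ 1 := by
      rw [abs_div, abs_of_pos hc0, div_le_one hc0]
      linarith
    have h2 : (1 - q ^ 2 / f y) ^ (-(3/2) : ℝ) ≤ (1 - r ^ 2) ^ (-(3/2) : ℝ) :=
      puck_bound_aux hc (hball q hq).le hr1 hr0 (by norm_num)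
    calc |q / f y| * (1 - q ^ 2 / f y) ^ (-(3/2) : ℝ)
        ≤ 1 * (1 - r ^ 2) ^ (-(3/2) : ℝ) := mul_le_mul h3 h2 h4 one_pos.le
      _ = (1 - r ^ 2) ^ (-(3/2) : ℝ) := one_mul _
  · intro y hy q hq
    have hc := hf1 y (Set.Ioc_subset_Icc_self hy)
    exact puck_dA hc (lt_trans (hball q hq) hr1)

include hf hf1 in
private lemma puck_derivD (q₀ : ℝ) (hq₀ : |q₀| < 1) :
    HasDerivAt (fun q => ∫ y in (0:ℝ)..1, (1 / f y) * (1 - q ^ 2 / f y) ^ (-(3/2) : ℝ))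
      (∫ y in (0:ℝ)..1, (3 * q₀ / (f y) ^ 2) * (1 - q₀ ^ 2 / f y) ^ (-(5/2) : ℝ)) q₀ := by
  set ε := (1 - |q₀|) / 2 with hεdef
  set r := (1 + |q₀|) / 2 with hrdef
  have hε : 0 < ε := by rw [hεdef]; linarith
  have hr1 : r < 1 := by rw [hrdef]; linarith
  have hr0 : 0 ≤ r := by rw [hrdef]; positivity
  have hball : ∀ q ∈ Metric.ball q₀ ε, |q| < r := fun q hq => puck_ball_abs hrdef hεdef hq
  refine puck_param_deriv (fun q y => (1 / f y) * (1 - q ^ 2 / f y) ^ (-(3/2) : ℝ))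
    (fun q y => (3 * q / (f y) ^ 2) * (1 - q ^ 2 / f y) ^ (-(5/2) : ℝ)) q₀ ε
    (3 * (1 - r ^ 2) ^ (-(5/2) : ℝ)) hε ?_ ?_ ?_ ?_
  · intro q hq
    have hfne : ∀ y ∈ Set.Icc (0:ℝ) 1, f y ≠ 0 := fun y hy => by
      have := hf1 y hy; positivity
    exact (continuousOn_const.div hf hfne).mul
      (puck_cont f hf hf1 (lt_trans (hball q hq) hr1) _)
  · exact (puck_cont_div f hf hf1 (3 * q₀) 2).mul (puck_cont f hf hf1 hq₀ _)
  · intro y hy q hq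
    have hc := hf1 y (Set.Ioc_subset_Icc_self hy)
    have hq1 : |q| < 1 := lt_trans (hball q hq) hr1
    have hu : 0 < 1 - q ^ 2 / f y := puck_pos hc hq1
    have hc0 : (0:ℝ) < f y := by linarith
    have h4 : (0:ℝ) ≤ (1 - q ^ 2 / f y) ^ (-(5/2) : ℝ) := Real.rpow_nonneg hu.le _
    rw [abs_mul, abs_of_nonneg h4]
    have h3 : |3 * q / (f y) ^ 2| ≤ 3 := by
      rw [abs_div, abs_of_pos (by positivity : (0:ℝ) < (f y) ^ 2),
        div_le_iff₀ (by positivity : (0:ℝ) < (f y) ^ 2)]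
      have h1 : |3 * q| ≤ 3 := by
        rw [abs_mul]
        norm_num
        linarith
      nlinarith [sq_nonneg (f y), abs_nonneg (3 * q)]
    have h2 : (1 - q ^ 2 / f y) ^ (-(5/2) : ℝ) ≤ (1 - r ^ 2) ^ (-(5/2) : ℝ) :=
      puck_bound_aux hc (hball q hq).le hr1 hr0 (by norm_num)
    exact mul_le_mul h3 h2 h4 (by norm_num)
  · intro y hy q hq
    have hc := hf1 y (Set.Ioc_subset_Icc_self hy)
    exact puck_dC hc (lt_trans (hball q hq) hr1)

end main

/-- For a generalized puck billiard with side metric `f(y) ds² + dy²` (`f ≥ 1`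
continuous), the length `V(p) = ∫₀¹ (1 − p²/f(y))^{−1/2} dy` of the geodesic segment
is, up to the additive constant `V(0) = 1`, the potential of the horizontal shift
`ℓ(p) = ∫₀¹ (p/f(y))(1 − p²/f(y))^{−1/2} dy`:
`p ℓ(p) − ∫₀^p ℓ(q) dq = V(p) − 1`, i.e. `V(p) − V(0) = ∫₀^p q ℓ'(q) dq`. -/
theorem generalized_puck_potential
    (f : ℝ → ℝ) (hf : ContinuousOn f (Set.Icc 0 1))
    (hf1 : ∀ y ∈ Set.Icc (0:ℝ) 1, 1 ≤ f y)
    (ℓ V : ℝ → ℝ)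
    (hℓ : ∀ p, ℓ p = ∫ y in (0:ℝ)..1, (p / f y) * (1 - p ^ 2 / f y) ^ (-(1/2) : ℝ))
    (hV : ∀ p, V p = ∫ y in (0:ℝ)..1, (1 - p ^ 2 / f y) ^ (-(1/2) : ℝ)) :
    ∀ p ∈ Set.Ioo (-1:ℝ) 1,
      p * ℓ p - (∫ q in (0:ℝ)..p, ℓ q) = V p - 1 ∧
      V p - V 0 = ∫ q in (0:ℝ)..p, q * deriv ℓ q := by
  have hℓfun : ℓ = fun p => ∫ y in (0:ℝ)..1, (p / f y) * (1 - p ^ 2 / f y) ^ (-(1/2) : ℝ) :=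
    funext hℓ
  have hVfun : V = fun p => ∫ y in (0:ℝ)..1, (1 - p ^ 2 / f y) ^ (-(1/2) : ℝ) :=
    funext hV
  set D : ℝ → ℝ := fun q => ∫ y in (0:ℝ)..1, (1 / f y) * (1 - q ^ 2 / f y) ^ (-(3/2) : ℝ)
    with hD
  -- ℓ has derivative D on (-1,1)
  have hℓderiv : ∀ q : ℝ, |q| < 1 → HasDerivAt ℓ (D q) q := by
    intro q hq
    rw [hℓfun, hD]
    exact puck_derivL f hf hf1 q hq
  have hderiv_eq : ∀ q : ℝ, |q| < 1 → deriv ℓ q = D q := fun q hq => (hℓderiv q hq).deriv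
  -- V has derivative q * D q on (-1,1)
  have hVderiv : ∀ q : ℝ, |q| < 1 → HasDerivAt V (q * D q) q := by
    intro q hq
    have h := puck_derivV f hf hf1 q hq
    have hpull : (∫ y in (0:ℝ)..1, (q / f y) * (1 - q ^ 2 / f y) ^ (-(3/2) : ℝ))
        = q * D q := by
      rw [hD]
      rw [← intervalIntegral.integral_const_mul]
      apply intervalIntegral.integral_congr
      intro y _
      simp only
      ring
    rw [hpull] at h
    rw [hVfun]
    exact h
  -- D is continuous at every point of (-1,1)
  have hDcont : ∀ q : ℝ, |q| < 1 → ContinuousAt D q := by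
    intro q hq
    exact (puck_derivD f hf hf1 q hq).continuousAt
  -- V 0 = 1
  have hV0 : V 0 = 1 := by
    rw [hV 0]
    have : ∀ y ∈ Set.uIcc (0:ℝ) 1,
        (1 - (0:ℝ) ^ 2 / f y) ^ (-(1/2) : ℝ) = 1 := by
      intro y _
      norm_num
    rw [intervalIntegral.integral_congr this]
    simp
  intro p hp
  have hp1 : |p| < 1 := abs_lt.mpr ⟨hp.1, hp.2⟩
  have habs : ∀ q ∈ Set.uIcc (0:ℝ) p, |q| < 1 := by
    intro q hq
    rw [Set.mem_uIcc] at hq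
    rcases hq with ⟨h1, h2⟩ | ⟨h1, h2⟩ <;>
      (rw [abs_lt]; rw [abs_lt] at hp1; constructor <;> linarith [hp1.1, hp1.2])
  -- interval integrability of q * deriv ℓ q on [0, p]
  have hqDcont : ContinuousOn (fun q => q * D q) (Set.uIcc 0 p) :=
    continuousOn_id.mul (fun q hq => (hDcont q (habs q hq)).continuousWithinAt)
  have hEq : Set.EqOn (fun q => q * deriv ℓ q) (fun q => q * D q) (Set.uIcc 0 p) := by
    intro q hq
    simp only [hderiv_eq q (habs q hq)]
  have hintD : IntervalIntegrable (fun q => q * D q) volume 0 p :=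
    hqDcont.intervalIntegrable
  have hint : IntervalIntegrable (fun q => q * deriv ℓ q) volume 0 p := by
    rw [intervalIntegrable_iff] at hintD ⊢
    exact hintD.congr_fun (fun x hx => (hEq (Set.uIoc_subset_uIcc hx)).symm)
      measurableSet_uIoc
  have hIeq : (∫ q in (0:ℝ)..p, q * deriv ℓ q) = ∫ q in (0:ℝ)..p, q * D q :=
    intervalIntegral.integral_congr hEq
  -- FTC for V
  have hVftc : (∫ q in (0:ℝ)..p, q * D q) = V p - V 0 :=
    intervalIntegral.integral_eq_sub_of_hasDerivAt
      (fun q hq => hVderiv q (habs q hq)) hintD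
  have goal2 : V p - V 0 = ∫ q in (0:ℝ)..p, q * deriv ℓ q := by
    rw [hIeq, hVftc]
  -- integration by parts
  have hDint : IntervalIntegrable (deriv ℓ) volume 0 p := by
    have hDc : ContinuousOn D (Set.uIcc 0 p) :=
      fun q hq => (hDcont q (habs q hq)).continuousWithinAt
    have h1 : IntervalIntegrable D volume 0 p := hDc.intervalIntegrable
    rw [intervalIntegrable_iff] at h1 ⊢
    exact h1.congr_fun
      (fun x hx => (hderiv_eq x (habs x (Set.uIoc_subset_uIcc hx))).symm)
      measurableSet_uIoc
  have parts := intervalIntegral.integral_mul_deriv_eq_deriv_mul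
    (u := fun x : ℝ => x) (v := ℓ) (u' := fun _ => (1:ℝ)) (v' := deriv ℓ)
    (fun x _ => hasDerivAt_id x)
    (fun x hx => by rw [hderiv_eq x (habs x hx)]; exact hℓderiv x (habs x hx))
    intervalIntegrable_const hDint
  -- parts : ∫ x in 0..p, x * deriv ℓ x = p * ℓ p - 0 * ℓ 0 - ∫ x in 0..p, 1 * ℓ x
  simp only [zero_mul, sub_zero, one_mul] at parts
  refine ⟨?_, goal2⟩
  have : p * ℓ p - (∫ q in (0:ℝ)..p, ℓ q) = ∫ q in (0:ℝ)..p, q * deriv ℓ q := by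
    rw [parts]
  rw [this, ← goal2, hV0]
end

section
/- Let σ : ℝ → ℝ³ be twice continuously differentiable with ‖σ(s)‖ = 1 and σ'(s) ≠ 0 for all s, and define r(s, β) = cos β · σ(s) + sin β · σ'(s)/‖σ'(s)‖. Then for all s and all β ∈ [0, π], the norm of the cross product of the partial derivatives satisfies ‖(∂r/∂s)(s, β) × (∂r/∂β)(s, β)‖ = sin β · |σ''(s) · (σ(s) × σ'(s))| / ‖σ'(s)‖². Consequently, for every θ ∈ [0, π] and s₁ ≤ s₂, the area of the region on the unit sphere swept by the tangent segment of angular length θ, namely ∫_{s₁}^{s₂} ∫₀^θ ‖∂_s r × ∂_β r‖ dβ ds, equals (1 − cos θ) · ∫_{s₁}^{s₂} |σ''(s) · (σ(s) × σ'(s))| / ‖σ'(s)‖² ds. -/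
open Real intervalIntegral

/-- The cross product on `EuclideanSpace ℝ (Fin 3)`. -/
noncomputable def cross3 (a b : EuclideanSpace ℝ (Fin 3)) : EuclideanSpace ℝ (Fin 3) :=
  (WithLp.equiv 2 (Fin 3 → ℝ)).symm
    (crossProduct ((WithLp.equiv 2 (Fin 3 → ℝ)) a) ((WithLp.equiv 2 (Fin 3 → ℝ)) b))

lemma cross3_key (x p q : EuclideanSpace ℝ (Fin 3)) (w mu cb sb : ℝ)
    (H1 : (inner ℝ x x : ℝ) = 1) (H2 : (inner ℝ x p : ℝ) = 0)
    (H3 : (inner ℝ x q : ℝ) + (inner ℝ p p : ℝ) = 0)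
    (H5 : mu + (inner ℝ q p : ℝ) * w ^ 3 = 0)
    (H7 : w ^ 2 * (inner ℝ p p : ℝ) = 1) :
    cross3 (cb • p + sb • (w • q + mu • p)) ((-sb) • x + (cb * w) • p)
      = (-(sb * (inner ℝ q (cross3 x p) : ℝ) * w ^ 2)) • (cb • x + (sb * w) • p) := by
  simp only [PiLp.inner_apply, RCLike.inner_apply, starRingEnd_apply, star_trivial,
    Fin.sum_univ_three] at H1 H2 H3 H5 H7
  ext i
  simp only [cross3, WithLp.equiv_symm_apply, WithLp.equiv_apply, WithLp.ofLp_toLp, cross_apply,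
    PiLp.inner_apply, RCLike.inner_apply, starRingEnd_apply, star_trivial, Fin.sum_univ_three,
    PiLp.add_apply, PiLp.smul_apply, PiLp.neg_apply, smul_eq_mul]
  fin_cases i <;>
    simp only [Fin.reduceFinMk, Fin.isValue, Matrix.cons_val_zero, Matrix.cons_val_one,
      Matrix.head_cons, Matrix.cons_val_two, Matrix.tail_cons]
  · linear_combination
      (w^2*cb*sb*(p 1 * q 2 - p 2 * q 1)) * H1 +
      (w^3*sb^2*(p 1 * q 2 - p 2 * q 1) + w^2*cb*sb*(x 2 * q 1 - x 1 * q 2)) * H2 +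
      (w^2*cb*sb*(x 1 * p 2 - x 2 * p 1)) * H3 +
      (sb^2*(x 1 * p 2 - x 2 * p 1)) * H5 +
      (w*sb^2*(x 2 * q 1 - x 1 * q 2) + cb*sb*(x 2 * p 1 - x 1 * p 2)) * H7
  · linear_combination
      (w^2*cb*sb*(p 2 * q 0 - p 0 * q 2)) * H1 +
      (w^3*sb^2*(p 2 * q 0 - p 0 * q 2) + w^2*cb*sb*(x 0 * q 2 - x 2 * q 0)) * H2 +
      (w^2*cb*sb*(x 2 * p 0 - x 0 * p 2)) * H3 +
      (sb^2*(x 2 * p 0 - x 0 * p 2)) * H5 +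
      (w*sb^2*(x 0 * q 2 - x 2 * q 0) + cb*sb*(x 0 * p 2 - x 2 * p 0)) * H7
  · linear_combination
      (w^2*cb*sb*(p 0 * q 1 - p 1 * q 0)) * H1 +
      (w^3*sb^2*(p 0 * q 1 - p 1 * q 0) + w^2*cb*sb*(x 1 * q 0 - x 0 * q 1)) * H2 +
      (w^2*cb*sb*(x 0 * p 1 - x 1 * p 0)) * H3 +
      (sb^2*(x 0 * p 1 - x 1 * p 0)) * H5 +
      (w*sb^2*(x 1 * q 0 - x 0 * q 1) + cb*sb*(x 1 * p 0 - x 0 * p 1)) * H7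

/-- Spherical swept-area formula: for a curve `σ` on the unit sphere with `σ' ≠ 0`, the
surface `r(s, β) = cos β σ(s) + sin β σ'(s)/‖σ'(s)‖` satisfies
`‖∂_s r × ∂_β r‖ = sin β |σ'' ⋅ (σ × σ')| / ‖σ'‖²`, and hence the area swept by a
tangent segment of angular length `θ` over `[s₁, s₂]` equals
`(1 − cos θ) ∫_{s₁}^{s₂} |σ'' ⋅ (σ × σ')| / ‖σ'‖² ds`. -/
theorem spherical_swept_area
    (σ : ℝ → EuclideanSpace ℝ (Fin 3)) (hσ : ContDiff ℝ 2 σ)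
    (hunit : ∀ s, ‖σ s‖ = 1) (hreg : ∀ s, deriv σ s ≠ 0)
    (r : ℝ → ℝ → EuclideanSpace ℝ (Fin 3))
    (hr : ∀ s β, r s β =
      Real.cos β • σ s + (Real.sin β / ‖deriv σ s‖) • deriv σ s) :
    (∀ s : ℝ, ∀ β ∈ Set.Icc (0:ℝ) Real.pi,
      ‖cross3 (deriv (fun u => r u β) s) (deriv (r s) β)‖
        = Real.sin β *
            |(inner ℝ (deriv (deriv σ) s) (cross3 (σ s) (deriv σ s)) : ℝ)| /
              ‖deriv σ s‖ ^ 2) ∧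
    ∀ θ ∈ Set.Icc (0:ℝ) Real.pi, ∀ s₁ s₂ : ℝ, s₁ ≤ s₂ →
      (∫ s in s₁..s₂, ∫ β in (0:ℝ)..θ,
          ‖cross3 (deriv (fun u => r u β) s) (deriv (r s) β)‖)
        = (1 - Real.cos θ) *
            ∫ s in s₁..s₂,
              |(inner ℝ (deriv (deriv σ) s) (cross3 (σ s) (deriv σ s)) : ℝ)| /
                ‖deriv σ s‖ ^ 2 := by
  have hσd : Differentiable ℝ σ := hσ.differentiable two_ne_zero
  have hσ'c : ContDiff ℝ 1 (deriv σ) := by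
    have h2 : ContDiff ℝ ((1 : ℕ) + 1 : ℕ) σ := by exact_mod_cast hσ
    exact (contDiff_succ_iff_deriv.mp (by exact_mod_cast h2)).2.2
  have hσ'd : Differentiable ℝ (deriv σ) := hσ'c.differentiable one_ne_zero
  have hvne : ∀ t, ‖deriv σ t‖ ≠ 0 := fun t => norm_ne_zero_iff.mpr (hreg t)
  have hxx : ∀ t, (inner ℝ (σ t) (σ t) : ℝ) = 1 := fun t => by
    rw [real_inner_self_eq_norm_sq, hunit, one_pow]
  have hxp : ∀ t, (inner ℝ (σ t) (deriv σ t) : ℝ) = 0 := by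
    intro t
    have h : HasDerivAt (fun u => (inner ℝ (σ u) (σ u) : ℝ))
        ((inner ℝ (σ t) (deriv σ t) : ℝ) + (inner ℝ (deriv σ t) (σ t) : ℝ)) t :=
      HasDerivAt.inner ℝ ((hσd t).hasDerivAt) ((hσd t).hasDerivAt)
    have h2 : HasDerivAt (fun u => (inner ℝ (σ u) (σ u) : ℝ)) 0 t := by
      have he : (fun u => (inner ℝ (σ u) (σ u) : ℝ)) = fun _ => 1 := funext hxx
      rw [he]; exact hasDerivAt_const _ _
    have h3 := h.unique h2
    have h4 := real_inner_comm (σ t) (deriv σ t)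
    linarith
  have hxq : ∀ t, (inner ℝ (σ t) (deriv (deriv σ) t) : ℝ)
      + (inner ℝ (deriv σ t) (deriv σ t) : ℝ) = 0 := by
    intro t
    have h : HasDerivAt (fun u => (inner ℝ (σ u) (deriv σ u) : ℝ))
        ((inner ℝ (σ t) (deriv (deriv σ) t) : ℝ) + (inner ℝ (deriv σ t) (deriv σ t) : ℝ)) t :=
      HasDerivAt.inner ℝ ((hσd t).hasDerivAt) ((hσ'd t).hasDerivAt)
    have h2 : HasDerivAt (fun u => (inner ℝ (σ u) (deriv σ u) : ℝ)) 0 t := by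
      have he : (fun u => (inner ℝ (σ u) (deriv σ u) : ℝ)) = fun _ => 0 := funext hxp
      rw [he]; exact hasDerivAt_const _ _
    exact h.unique h2
  -- inverse norm function
  have hgd : ∀ t, DifferentiableAt ℝ (fun u => (‖deriv σ u‖)⁻¹) t := fun t =>
    (DifferentiableAt.norm (𝕜 := ℝ) (hσ'd t) (hreg t)).inv (hvne t)
  -- the constraint on μ := deriv of inverse norm
  have hmu : ∀ t, deriv (fun u => (‖deriv σ u‖)⁻¹) t
      + (inner ℝ (deriv (deriv σ) t) (deriv σ t) : ℝ) * ((‖deriv σ t‖)⁻¹) ^ 3 = 0 := by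
    intro t
    have hF : HasDerivAt (fun u => ((‖deriv σ u‖)⁻¹) ^ 2 * (inner ℝ (deriv σ u) (deriv σ u) : ℝ))
        ((2 * (‖deriv σ t‖)⁻¹ ^ 1 * deriv (fun u => (‖deriv σ u‖)⁻¹) t)
            * (inner ℝ (deriv σ t) (deriv σ t) : ℝ)
          + ((‖deriv σ t‖)⁻¹) ^ 2 *
            ((inner ℝ (deriv σ t) (deriv (deriv σ) t) : ℝ)
              + (inner ℝ (deriv (deriv σ) t) (deriv σ t) : ℝ))) t :=
      HasDerivAt.mul (((hgd t).hasDerivAt).pow 2)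
        (HasDerivAt.inner ℝ ((hσ'd t).hasDerivAt) ((hσ'd t).hasDerivAt))
    have h1 : HasDerivAt (fun u => ((‖deriv σ u‖)⁻¹) ^ 2
        * (inner ℝ (deriv σ u) (deriv σ u) : ℝ)) 0 t := by
      have he : (fun u => ((‖deriv σ u‖)⁻¹) ^ 2 * (inner ℝ (deriv σ u) (deriv σ u) : ℝ))
          = fun _ => 1 := by
        funext u
        rw [real_inner_self_eq_norm_sq]
        field_simp [hvne u]
      rw [he]; exact hasDerivAt_const _ _
    have hE := hF.unique h1
    have hcomm : (inner ℝ (deriv σ t) (deriv (deriv σ) t) : ℝ)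
        = (inner ℝ (deriv (deriv σ) t) (deriv σ t) : ℝ) := real_inner_comm _ _
    have hv2 : (inner ℝ (deriv σ t) (deriv σ t) : ℝ) = ‖deriv σ t‖ ^ 2 :=
      real_inner_self_eq_norm_sq _
    have hw : (‖deriv σ t‖)⁻¹ * ‖deriv σ t‖ = 1 := inv_mul_cancel₀ (hvne t)
    linear_combination ((‖deriv σ t‖)⁻¹ / 2) * hE
      - (deriv (fun u => (‖deriv σ u‖)⁻¹) t) * ((‖deriv σ t‖)⁻¹) ^ 2 * hv2
      - (((‖deriv σ t‖)⁻¹) ^ 3 / 2) * hcomm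
      - (deriv (fun u => (‖deriv σ u‖)⁻¹) t) * (1 + (‖deriv σ t‖)⁻¹ * ‖deriv σ t‖) * hw
  -- derivative in β
  have hb : ∀ s β, deriv (r s) β
      = (-Real.sin β) • σ s + (Real.cos β * (‖deriv σ s‖)⁻¹) • deriv σ s := by
    intro s β
    have he : r s = fun β => Real.cos β • σ s + (Real.sin β / ‖deriv σ s‖) • deriv σ s :=
      funext (hr s)
    rw [he]
    have h := ((Real.hasDerivAt_cos β).smul_const (σ s)).add
      (((Real.hasDerivAt_sin β).div_const ‖deriv σ s‖).smul_const (deriv σ s))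
    rw [HasDerivAt.deriv (f := fun β => Real.cos β • σ s + (Real.sin β / ‖deriv σ s‖) • deriv σ s) h]
    rw [div_eq_mul_inv]
  -- derivative in s
  have ha : ∀ s β, deriv (fun u => r u β) s
      = Real.cos β • deriv σ s + Real.sin β •
          ((‖deriv σ s‖)⁻¹ • deriv (deriv σ) s
            + deriv (fun u => (‖deriv σ u‖)⁻¹) s • deriv σ s) := by
    intro s β
    have he : (fun u => r u β)
        = fun u => Real.cos β • σ u + Real.sin β • ((‖deriv σ u‖)⁻¹ • deriv σ u) := by
      funext u
      rw [hr, div_eq_mul_inv, mul_smul]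
    rw [he]
    have h := (((hσd s).hasDerivAt).const_smul (Real.cos β)).add
      ((((hgd s).hasDerivAt).smul ((hσ'd s).hasDerivAt)).const_smul (Real.sin β))
    rw [HasDerivAt.deriv (f := fun u => Real.cos β • σ u + Real.sin β • ((‖deriv σ u‖)⁻¹ • deriv σ u)) h]
  -- norm of r s β is 1
  have hrnorm : ∀ s β, ‖Real.cos β • σ s + (Real.sin β * (‖deriv σ s‖)⁻¹) • deriv σ s‖ = 1 := by
    intro s β
    have hsq : ‖Real.cos β • σ s + (Real.sin β * (‖deriv σ s‖)⁻¹) • deriv σ s‖ ^ 2 = 1 := by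
      rw [norm_add_sq_real]
      rw [norm_smul, norm_smul, real_inner_smul_left, real_inner_smul_right, hxp]
      simp only [Real.norm_eq_abs, hunit, mul_one, mul_zero]
      rw [mul_pow, sq_abs]
      have hw : (‖deriv σ s‖)⁻¹ * ‖deriv σ s‖ = 1 := inv_mul_cancel₀ (hvne s)
      linear_combination Real.sin_sq_add_cos_sq β
        + (Real.sin β) ^ 2 * ((‖deriv σ s‖)⁻¹ * ‖deriv σ s‖ + 1) * hw
        + ‖deriv σ s‖ ^ 2 * sq_abs (Real.sin β * (‖deriv σ s‖)⁻¹)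
    have h0 := Real.sqrt_sq
      (norm_nonneg (Real.cos β • σ s + (Real.sin β * (‖deriv σ s‖)⁻¹) • deriv σ s))
    rw [hsq, Real.sqrt_one] at h0
    exact h0.symm
  -- Part 1
  have part1 : ∀ s : ℝ, ∀ β ∈ Set.Icc (0:ℝ) Real.pi,
      ‖cross3 (deriv (fun u => r u β) s) (deriv (r s) β)‖
        = Real.sin β *
            |(inner ℝ (deriv (deriv σ) s) (cross3 (σ s) (deriv σ s)) : ℝ)| /
              ‖deriv σ s‖ ^ 2 := by
    intro s β hβ
    have hsb : 0 ≤ Real.sin β := Real.sin_nonneg_of_nonneg_of_le_pi hβ.1 hβ.2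
    have hkey := cross3_key (σ s) (deriv σ s) (deriv (deriv σ) s)
      ((‖deriv σ s‖)⁻¹) (deriv (fun u => (‖deriv σ u‖)⁻¹) s) (Real.cos β) (Real.sin β)
      (hxx s) (hxp s) (hxq s) (hmu s)
      (by rw [real_inner_self_eq_norm_sq]; field_simp [hvne s])
    rw [ha, hb, hkey]
    rw [norm_smul, Real.norm_eq_abs, hrnorm, mul_one]
    rw [abs_neg, abs_mul, abs_mul, abs_of_nonneg hsb,
      abs_of_nonneg (sq_nonneg ((‖deriv σ s‖)⁻¹))]
    rw [inv_pow, div_eq_mul_inv]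
  refine ⟨part1, ?_⟩
  intro θ hθ s₁ s₂ h12
  have hinner : ∀ s : ℝ,
      (∫ β in (0:ℝ)..θ, ‖cross3 (deriv (fun u => r u β) s) (deriv (r s) β)‖)
        = (1 - Real.cos θ) *
            (|(inner ℝ (deriv (deriv σ) s) (cross3 (σ s) (deriv σ s)) : ℝ)| /
              ‖deriv σ s‖ ^ 2) := by
    intro s
    have hcongr : (∫ β in (0:ℝ)..θ, ‖cross3 (deriv (fun u => r u β) s) (deriv (r s) β)‖)
        = ∫ β in (0:ℝ)..θ, Real.sin β *
            (|(inner ℝ (deriv (deriv σ) s) (cross3 (σ s) (deriv σ s)) : ℝ)| /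
              ‖deriv σ s‖ ^ 2) := by
      apply intervalIntegral.integral_congr
      intro β hβ
      dsimp only
      rw [Set.uIcc_of_le hθ.1] at hβ
      have hβ' : β ∈ Set.Icc (0:ℝ) Real.pi := ⟨hβ.1, hβ.2.trans hθ.2⟩
      rw [part1 s β hβ', mul_div_assoc]
    rw [hcongr, intervalIntegral.integral_mul_const, integral_sin, Real.cos_zero]
  simp only [hinner]
  rw [intervalIntegral.integral_const_mul]
end

section
/- Let 0 < h₂ ≤ h₁ < 1, set ρ = √(1 − h₁²), let σ(s) = (ρ cos s, ρ sin s, h₁) be the latitude circle of the unit sphere at height h₁, let θ = arccos(h₂/h₁), and define r(s, β) = cos β · σ(s) + sin β · σ'(s)/‖σ'(s)‖. Then ∫₀^{2π} ∫₀^θ ‖(∂r/∂s)(s, β) × (∂r/∂β)(s, β)‖ dβ ds = 2π(h₁ − h₂); that is, the area of the spherical zone between heights h₂ and h₁ equals the area 2π(h₁ − h₂) of its radial projection onto the circumscribed cylinder (Archimedes' theorem). -/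
open Real intervalIntegral

private lemma hd3 {f g h : ℝ → ℝ} {f' g' h' : ℝ} {x : ℝ}
    (hf : HasDerivAt f f' x) (hg : HasDerivAt g g' x) (hh : HasDerivAt h h' x) :
    HasDerivAt (fun t => (WithLp.equiv 2 (Fin 3 → ℝ)).symm ![f t, g t, h t])
      ((WithLp.equiv 2 (Fin 3 → ℝ)).symm ![f', g', h']) x := by
  have hpi : HasDerivAt (fun t => (![f t, g t, h t] : Fin 3 → ℝ)) ![f', g', h'] x :=
    hasDerivAt_pi.2 (by intro i; fin_cases i <;> simpa)
  exact ((PiLp.continuousLinearEquiv 2 ℝ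
    (fun _ : Fin 3 => ℝ)).symm.toContinuousLinearMap.hasFDerivAt).comp_hasDerivAt x hpi

private lemma norm3 (a b c : ℝ) :
    ‖(WithLp.equiv 2 (Fin 3 → ℝ)).symm ![a, b, c]‖ = Real.sqrt (a^2 + b^2 + c^2) := by
  rw [EuclideanSpace.norm_eq]
  congr 1
  simp [Fin.sum_univ_three, WithLp.equiv_symm_apply, PiLp.toLp_apply, sq_abs]

private lemma cross3_symm (a b : Fin 3 → ℝ) :
    cross3 ((WithLp.equiv 2 (Fin 3 → ℝ)).symm a) ((WithLp.equiv 2 (Fin 3 → ℝ)).symm b)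
      = (WithLp.equiv 2 (Fin 3 → ℝ)).symm
        ![a 1 * b 2 - a 2 * b 1, a 2 * b 0 - a 0 * b 2, a 0 * b 1 - a 1 * b 0] := by
  rw [cross3, Equiv.apply_symm_apply, Equiv.apply_symm_apply, cross_apply]

/-- Archimedes' theorem, as a special case of the spherical swept-area formula: the
area of the spherical zone between heights `h₂ ≤ h₁`, swept by the tangent segment of
angular length `θ = arccos (h₂/h₁)` moving along the latitude circle at height `h₁`,
equals `2π(h₁ − h₂)`, the area of its radial projection onto the circumscribed
cylinder. -/
theorem archimedes_zone_area
    (h₁ h₂ : ℝ) (h0 : 0 < h₂) (h21 : h₂ ≤ h₁) (h11 : h₁ < 1)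
    (ρ θ : ℝ) (hρ : ρ = Real.sqrt (1 - h₁ ^ 2)) (hθ : θ = Real.arccos (h₂ / h₁))
    (σ : ℝ → EuclideanSpace ℝ (Fin 3))
    (hσ : ∀ s, σ s = (WithLp.equiv 2 (Fin 3 → ℝ)).symm
      ![ρ * Real.cos s, ρ * Real.sin s, h₁])
    (r : ℝ → ℝ → EuclideanSpace ℝ (Fin 3))
    (hr : ∀ s β, r s β =
      Real.cos β • σ s + (Real.sin β / ‖deriv σ s‖) • deriv σ s) :
    (∫ s in (0:ℝ)..(2 * Real.pi), ∫ β in (0:ℝ)..θ,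
        ‖cross3 (deriv (fun u => r u β) s) (deriv (r s) β)‖)
      = 2 * Real.pi * (h₁ - h₂) := by
  have h₁pos : 0 < h₁ := lt_of_lt_of_le h0 h21
  have hρ2 : ρ ^ 2 = 1 - h₁ ^ 2 := by
    rw [hρ]; exact Real.sq_sqrt (by nlinarith)
  have hρpos : 0 < ρ := by
    rw [hρ]; exact Real.sqrt_pos.2 (by nlinarith)
  have hσf : σ = fun s => (WithLp.equiv 2 (Fin 3 → ℝ)).symm
      ![ρ * Real.cos s, ρ * Real.sin s, h₁] := funext hσ
  subst hσf
  -- derivative of σ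
  have hσd : ∀ s : ℝ, HasDerivAt (fun s => (WithLp.equiv 2 (Fin 3 → ℝ)).symm
      ![ρ * Real.cos s, ρ * Real.sin s, h₁])
      ((WithLp.equiv 2 (Fin 3 → ℝ)).symm ![ρ * -Real.sin s, ρ * Real.cos s, 0]) s :=
    fun s => hd3 ((Real.hasDerivAt_cos s).const_mul ρ)
      ((Real.hasDerivAt_sin s).const_mul ρ) (hasDerivAt_const s h₁)
  have hnd : ∀ s : ℝ, deriv (fun s => (WithLp.equiv 2 (Fin 3 → ℝ)).symm
      ![ρ * Real.cos s, ρ * Real.sin s, h₁]) s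
      = (WithLp.equiv 2 (Fin 3 → ℝ)).symm ![ρ * -Real.sin s, ρ * Real.cos s, 0] :=
    fun s => (hσd s).deriv
  have hns : ∀ s : ℝ, ‖deriv (fun s => (WithLp.equiv 2 (Fin 3 → ℝ)).symm
      ![ρ * Real.cos s, ρ * Real.sin s, h₁]) s‖ = ρ := by
    intro s
    rw [hnd s, norm3,
      show (ρ * -Real.sin s)^2 + (ρ * Real.cos s)^2 + (0:ℝ)^2 = ρ^2 by
        linear_combination ρ^2 * Real.sin_sq_add_cos_sq s]
    exact Real.sqrt_sq hρpos.le
  -- explicit form of r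
  have hrf : ∀ s β : ℝ, r s β = (WithLp.equiv 2 (Fin 3 → ℝ)).symm
      ![ρ * Real.cos β * Real.cos s + (-Real.sin β) * Real.sin s,
        Real.sin β * Real.cos s + ρ * Real.cos β * Real.sin s,
        h₁ * Real.cos β] := by
    intro s β
    rw [hr, hns, hnd]
    ext i
    fin_cases i <;>
      (try simp [WithLp.equiv_symm_apply, PiLp.toLp_apply, PiLp.add_apply, PiLp.smul_apply, smul_eq_mul]) <;>
      (try field_simp) <;> (try ring)
  -- derivative in s
  have hds : ∀ s β : ℝ, deriv (fun u => r u β) s = (WithLp.equiv 2 (Fin 3 → ℝ)).symm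
      ![ρ * Real.cos β * -Real.sin s + (-Real.sin β) * Real.cos s,
        Real.sin β * -Real.sin s + ρ * Real.cos β * Real.cos s,
        0] := by
    intro s β
    rw [show (fun u => r u β) = (fun u => (WithLp.equiv 2 (Fin 3 → ℝ)).symm
      ![ρ * Real.cos β * Real.cos u + (-Real.sin β) * Real.sin u,
        Real.sin β * Real.cos u + ρ * Real.cos β * Real.sin u,
        h₁ * Real.cos β]) from funext fun u => hrf u β]
    exact (hd3
      (((Real.hasDerivAt_cos s).const_mul (ρ * Real.cos β)).add
        ((Real.hasDerivAt_sin s).const_mul (-Real.sin β)))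
      (((Real.hasDerivAt_cos s).const_mul (Real.sin β)).add
        ((Real.hasDerivAt_sin s).const_mul (ρ * Real.cos β)))
      (hasDerivAt_const s (h₁ * Real.cos β))).deriv
  -- derivative in β
  have hdb : ∀ s β : ℝ, deriv (r s) β = (WithLp.equiv 2 (Fin 3 → ℝ)).symm
      ![ρ * -Real.sin β * Real.cos s + -Real.cos β * Real.sin s,
        Real.cos β * Real.cos s + ρ * -Real.sin β * Real.sin s,
        h₁ * -Real.sin β] := by
    intro s β
    rw [show (r s) = (fun b => (WithLp.equiv 2 (Fin 3 → ℝ)).symm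
      ![ρ * Real.cos b * Real.cos s + (-Real.sin b) * Real.sin s,
        Real.sin b * Real.cos s + ρ * Real.cos b * Real.sin s,
        h₁ * Real.cos b]) from funext fun b => hrf s b]
    exact (hd3
      ((((Real.hasDerivAt_cos β).const_mul ρ).mul_const (Real.cos s)).add
        (((Real.hasDerivAt_sin β).neg).mul_const (Real.sin s)))
      (((Real.hasDerivAt_sin β).mul_const (Real.cos s)).add
        (((Real.hasDerivAt_cos β).const_mul ρ).mul_const (Real.sin s)))
      ((Real.hasDerivAt_cos β).const_mul h₁)).deriv
  -- the integrand
  have hint : ∀ s β : ℝ, 0 ≤ Real.sin β →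
      ‖cross3 (deriv (fun u => r u β) s) (deriv (r s) β)‖ = h₁ * Real.sin β := by
    intro s β hsb
    rw [hds, hdb, cross3_symm, norm3]
    simp only [Matrix.cons_val_zero, Matrix.cons_val_one, Matrix.head_cons,
      Matrix.cons_val_two, Matrix.tail_cons]
    rw [show (h₁ * Real.sin β) = Real.sqrt ((h₁ * Real.sin β)^2) from
      (Real.sqrt_sq (mul_nonneg h₁pos.le hsb)).symm]
    congr 1
    linear_combination
      (h₁^2*(Real.sin β)^2*(ρ^2*(Real.cos β)^2+(Real.sin β)^2) +
        (Real.cos β)^2*(Real.sin β)^2*(ρ^2-1)^2*((Real.sin s)^2+(Real.cos s)^2+1))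
          * (Real.sin_sq_add_cos_sq s)
      + h₁^2*(Real.sin β)^2 * (Real.sin_sq_add_cos_sq β)
      + (Real.cos β)^2*(Real.sin β)^2*(ρ^2-1) * hρ2
  -- bounds on θ
  subst hθ
  have hd1 : h₂ / h₁ ≤ 1 := (div_le_one h₁pos).2 h21
  have hd0 : (-1 : ℝ) ≤ h₂ / h₁ :=
    le_trans (by norm_num) (div_nonneg h0.le h₁pos.le)
  have hθ0 : 0 ≤ Real.arccos (h₂ / h₁) := Real.arccos_nonneg _
  have hθπ : Real.arccos (h₂ / h₁) ≤ Real.pi := Real.arccos_le_pi _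
  have hinner : ∀ s : ℝ, (∫ β in (0:ℝ)..Real.arccos (h₂ / h₁),
      ‖cross3 (deriv (fun u => r u β) s) (deriv (r s) β)‖) = h₁ - h₂ := by
    intro s
    have hEq : Set.EqOn (fun β => ‖cross3 (deriv (fun u => r u β) s) (deriv (r s) β)‖)
        (fun β => h₁ * Real.sin β) (Set.uIcc (0:ℝ) (Real.arccos (h₂ / h₁))) := by
      intro β hβ
      rw [Set.uIcc_of_le hθ0] at hβ
      exact hint s β (Real.sin_nonneg_of_nonneg_of_le_pi hβ.1 (hβ.2.trans hθπ))
    rw [intervalIntegral.integral_congr hEq, intervalIntegral.integral_const_mul,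
      integral_sin, Real.cos_zero, Real.cos_arccos hd0 hd1]
    field_simp
  simp only [hinner]
  rw [intervalIntegral.integral_const]
  rw [smul_eq_mul]
  ring
end

section
/- Let γ : ℝ → ℝ³ be three times differentiable with ‖γ(s)‖ = 1 and ‖γ'(s)‖ = 1 for all s, and define the dual curve γ*(s) = γ(s) × γ'(s). Then for every s: (i) ‖γ*'(s)‖² = (γ''(s) · (γ(s) × γ'(s)))², and (ii) |γ*''(s) · (γ*(s) × γ*'(s))| = (γ''(s) · (γ(s) × γ'(s)))². In particular, whenever γ''(s) · (γ(s) × γ'(s)) ≠ 0, one has |γ*''(s) · (γ*(s) × γ*'(s))| / ‖γ*'(s)‖² = 1. -/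
open Real
noncomputable def e3 : EuclideanSpace ℝ (Fin 3) ≃L[ℝ] (Fin 3 → ℝ) := EuclideanSpace.equiv (Fin 3) ℝ

lemma comp_hasDerivAt {f : ℝ → EuclideanSpace ℝ (Fin 3)} {u : EuclideanSpace ℝ (Fin 3)} {s : ℝ}
    (hf : HasDerivAt f u s) (i : Fin 3) : HasDerivAt (fun t => f t i) (u i) s :=
  hasDerivAt_pi.1 (e3.toContinuousLinearMap.hasFDerivAt.comp_hasDerivAt s hf) i

lemma hasDerivAt_cross3 {f g : ℝ → EuclideanSpace ℝ (Fin 3)}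
    {u v : EuclideanSpace ℝ (Fin 3)} {s : ℝ}
    (hf : HasDerivAt f u s) (hg : HasDerivAt g v s) :
    HasDerivAt (fun t => cross3 (f t) (g t)) (cross3 u (g s) + cross3 (f s) v) s := by
  have hfi := comp_hasDerivAt hf
  have hgi := comp_hasDerivAt hg
  have hw : HasDerivAt (fun t => (fun i =>
      ![f t 1 * g t 2 - f t 2 * g t 1,
        f t 2 * g t 0 - f t 0 * g t 2,
        f t 0 * g t 1 - f t 1 * g t 0] i : Fin 3 → ℝ))
      ![u 1 * g s 2 + f s 1 * v 2 - (u 2 * g s 1 + f s 2 * v 1),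
        u 2 * g s 0 + f s 2 * v 0 - (u 0 * g s 2 + f s 0 * v 2),
        u 0 * g s 1 + f s 0 * v 1 - (u 1 * g s 0 + f s 1 * v 0)] s := by
    apply hasDerivAt_pi.2
    intro i
    fin_cases i <;> simp only [Matrix.cons_val_zero, Matrix.cons_val_one, Matrix.head_cons,
      Matrix.cons_val_two, Matrix.tail_cons, Fin.isValue]
    · exact ((hfi 1).mul (hgi 2)).sub ((hfi 2).mul (hgi 1))
    · exact ((hfi 2).mul (hgi 0)).sub ((hfi 0).mul (hgi 2))
    · exact ((hfi 0).mul (hgi 1)).sub ((hfi 1).mul (hgi 0))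
  have := e3.symm.toContinuousLinearMap.hasFDerivAt.comp_hasDerivAt s hw
  have hval : cross3 u (g s) + cross3 (f s) v =
      e3.symm ![u 1 * g s 2 + f s 1 * v 2 - (u 2 * g s 1 + f s 2 * v 1),
        u 2 * g s 0 + f s 2 * v 0 - (u 0 * g s 2 + f s 0 * v 2),
        u 0 * g s 1 + f s 0 * v 1 - (u 1 * g s 0 + f s 1 * v 0)] := by
    apply e3.injective
    funext i
    fin_cases i <;> simp [cross3, crossProduct, e3] <;> ring
  have hfun : (fun t => cross3 (f t) (g t)) = (⇑e3.symm ∘ fun t i =>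
      ![f t 1 * g t 2 - f t 2 * g t 1, f t 2 * g t 0 - f t 0 * g t 2,
        f t 0 * g t 1 - f t 1 * g t 0] i) := by
    funext t
    apply e3.injective
    funext i
    fin_cases i <;> simp [cross3, crossProduct, e3]
  rw [hval, hfun]
  exact this

/-- For a unit-speed curve `γ` on the unit sphere with dual curve `γ* = γ × γ'`:
(i) `‖γ*'‖² = (γ'' ⋅ (γ × γ'))²` and (ii) `|γ*'' ⋅ (γ* × γ*')| = (γ'' ⋅ (γ × γ'))²`;
in particular, when `γ'' ⋅ (γ × γ') ≠ 0`, the density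
`|γ*'' ⋅ (γ* × γ*')| / ‖γ*'‖²` equals `1`. -/
theorem dual_curve_density_one
    (γ γ' γ'' γ''' : ℝ → EuclideanSpace ℝ (Fin 3))
    (hd1 : ∀ s, HasDerivAt γ (γ' s) s) (hd2 : ∀ s, HasDerivAt γ' (γ'' s) s)
    (hd3 : ∀ s, HasDerivAt γ'' (γ''' s) s)
    (h1 : ∀ s, ‖γ s‖ = 1) (h2 : ∀ s, ‖γ' s‖ = 1)
    (γs : ℝ → EuclideanSpace ℝ (Fin 3))
    (hγs : ∀ s, γs s = cross3 (γ s) (γ' s)) :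
    ∀ s : ℝ,
      ‖deriv γs s‖ ^ 2 = (inner ℝ (γ'' s) (cross3 (γ s) (γ' s)) : ℝ) ^ 2 ∧
      |(inner ℝ (deriv (deriv γs) s) (cross3 (γs s) (deriv γs s)) : ℝ)|
        = (inner ℝ (γ'' s) (cross3 (γ s) (γ' s)) : ℝ) ^ 2 ∧
      ((inner ℝ (γ'' s) (cross3 (γ s) (γ' s)) : ℝ) ≠ 0 →
        |(inner ℝ (deriv (deriv γs) s) (cross3 (γs s) (deriv γs s)) : ℝ)| /
            ‖deriv γs s‖ ^ 2 = 1) := by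
  -- inner product facts
  have haa : ∀ s, (inner ℝ (γ s) (γ s) : ℝ) = 1 := fun s => by
    rw [real_inner_self_eq_norm_sq, h1 s]; norm_num
  have hbb : ∀ s, (inner ℝ (γ' s) (γ' s) : ℝ) = 1 := fun s => by
    rw [real_inner_self_eq_norm_sq, h2 s]; norm_num
  have hab : ∀ s, (inner ℝ (γ s) (γ' s) : ℝ) = 0 := by
    intro s
    have hderiv : HasDerivAt (fun t => (inner ℝ (γ t) (γ t) : ℝ))
        ((inner ℝ (γ s) (γ' s) : ℝ) + (inner ℝ (γ' s) (γ s) : ℝ)) s :=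
      (hd1 s).inner ℝ (hd1 s)
    have hconst : (fun t => (inner ℝ (γ t) (γ t) : ℝ)) = fun _ => 1 := funext fun t => haa t
    rw [hconst] at hderiv
    have := hderiv.unique (hasDerivAt_const s 1)
    have hc := real_inner_comm (γ' s) (γ s)
    linarith
  have hbc : ∀ s, (inner ℝ (γ' s) (γ'' s) : ℝ) = 0 := by
    intro s
    have hderiv : HasDerivAt (fun t => (inner ℝ (γ' t) (γ' t) : ℝ))
        ((inner ℝ (γ' s) (γ'' s) : ℝ) + (inner ℝ (γ'' s) (γ' s) : ℝ)) s :=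
      (hd2 s).inner ℝ (hd2 s)
    have hconst : (fun t => (inner ℝ (γ' t) (γ' t) : ℝ)) = fun _ => 1 := funext fun t => hbb t
    rw [hconst] at hderiv
    have := hderiv.unique (hasDerivAt_const s 1)
    have hc := real_inner_comm (γ'' s) (γ' s)
    linarith
  have hac : ∀ s, (inner ℝ (γ s) (γ'' s) : ℝ) = -1 := by
    intro s
    have hderiv : HasDerivAt (fun t => (inner ℝ (γ t) (γ' t) : ℝ))
        ((inner ℝ (γ s) (γ'' s) : ℝ) + (inner ℝ (γ' s) (γ' s) : ℝ)) s :=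
      (hd1 s).inner ℝ (hd2 s)
    have hconst : (fun t => (inner ℝ (γ t) (γ' t) : ℝ)) = fun _ => 0 := funext fun t => hab t
    rw [hconst] at hderiv
    have := hderiv.unique (hasDerivAt_const s 0)
    have h := hbb s
    linarith
  -- derivatives of the dual curve
  have hds : ∀ s, HasDerivAt γs (cross3 (γ s) (γ'' s)) s := by
    intro s
    have h := hasDerivAt_cross3 (hd1 s) (hd2 s)
    have h0 : cross3 (γ' s) (γ' s) = 0 := by
      apply e3.injective
      funext i
      fin_cases i <;> simp [cross3, crossProduct, e3] <;> ring
    rw [h0, zero_add] at h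
    have hfun : (fun t => cross3 (γ t) (γ' t)) = γs := funext fun t => (hγs t).symm
    rwa [hfun] at h
  have hderiv1 : deriv γs = fun s => cross3 (γ s) (γ'' s) := funext fun s => (hds s).deriv
  have hds2 : ∀ s, HasDerivAt (deriv γs)
      (cross3 (γ' s) (γ'' s) + cross3 (γ s) (γ''' s)) s := by
    intro s
    rw [hderiv1]
    exact hasDerivAt_cross3 (hd1 s) (hd3 s)
  have hderiv2 : ∀ s, deriv (deriv γs) s
      = cross3 (γ' s) (γ'' s) + cross3 (γ s) (γ''' s) := fun s => (hds2 s).deriv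
  intro s
  have hd1' : deriv γs s = cross3 (γ s) (γ'' s) := by rw [hderiv1]
  -- component constraints
  have Haa : γ s 0 * γ s 0 + γ s 1 * γ s 1 + γ s 2 * γ s 2 = 1 := by
    have := haa s; simp only [PiLp.inner_apply, Fin.sum_univ_three, RCLike.inner_apply, conj_trivial] at this; linear_combination this
  have Hbb : γ' s 0 * γ' s 0 + γ' s 1 * γ' s 1 + γ' s 2 * γ' s 2 = 1 := by
    have := hbb s; simp only [PiLp.inner_apply, Fin.sum_univ_three, RCLike.inner_apply, conj_trivial] at this; linear_combination this
  have Hab : γ s 0 * γ' s 0 + γ s 1 * γ' s 1 + γ s 2 * γ' s 2 = 0 := by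
    have := hab s; simp only [PiLp.inner_apply, Fin.sum_univ_three, RCLike.inner_apply, conj_trivial] at this; linear_combination this
  have Hac : γ s 0 * γ'' s 0 + γ s 1 * γ'' s 1 + γ s 2 * γ'' s 2 = -1 := by
    have := hac s; simp only [PiLp.inner_apply, Fin.sum_univ_three, RCLike.inner_apply, conj_trivial] at this; linear_combination this
  have Hbc : γ' s 0 * γ'' s 0 + γ' s 1 * γ'' s 1 + γ' s 2 * γ'' s 2 = 0 := by
    have := hbc s; simp only [PiLp.inner_apply, Fin.sum_univ_three, RCLike.inner_apply, conj_trivial] at this; linear_combination this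
  -- key identity (i)
  have key1 : ‖deriv γs s‖ ^ 2 = (inner ℝ (γ'' s) (cross3 (γ s) (γ' s)) : ℝ) ^ 2 := by
    rw [← real_inner_self_eq_norm_sq, hd1']
    simp only [cross3, PiLp.inner_apply, Fin.sum_univ_three, RCLike.inner_apply, conj_trivial,
      WithLp.equiv_symm_apply, PiLp.toLp_apply, WithLp.equiv_apply, crossProduct, LinearMap.mk₂_apply,
      Matrix.cons_val_zero, Matrix.cons_val_one, Matrix.head_cons, Matrix.cons_val_two,
      Matrix.tail_cons]
    linear_combination
      (((γ s 0 * γ'' s 0 + γ s 1 * γ'' s 1 + γ s 2 * γ'' s 2)^2 -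
        (γ s 0 * γ s 0 + γ s 1 * γ s 1 + γ s 2 * γ s 2) *
          (γ'' s 0 * γ'' s 0 + γ'' s 1 * γ'' s 1 + γ'' s 2 * γ'' s 2)) * Hbb)
      + (((γ s 0 * γ s 0 + γ s 1 * γ s 1 + γ s 2 * γ s 2) *
            (γ' s 0 * γ'' s 0 + γ' s 1 * γ'' s 1 + γ' s 2 * γ'' s 2)
          - (γ s 0 * γ' s 0 + γ s 1 * γ' s 1 + γ s 2 * γ' s 2) *
            (γ s 0 * γ'' s 0 + γ s 1 * γ'' s 1 + γ s 2 * γ'' s 2)) * Hbc)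
      + (((γ'' s 0 * γ'' s 0 + γ'' s 1 * γ'' s 1 + γ'' s 2 * γ'' s 2) *
            (γ s 0 * γ' s 0 + γ s 1 * γ' s 1 + γ s 2 * γ' s 2)
          - (γ s 0 * γ'' s 0 + γ s 1 * γ'' s 1 + γ s 2 * γ'' s 2) *
            (γ' s 0 * γ'' s 0 + γ' s 1 * γ'' s 1 + γ' s 2 * γ'' s 2)) * Hab)
  -- key identity (ii)
  have key2 : (inner ℝ (deriv (deriv γs) s) (cross3 (γs s) (deriv γs s)) : ℝ)
      = (inner ℝ (γ'' s) (cross3 (γ s) (γ' s)) : ℝ) ^ 2 := by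
    rw [hderiv2 s, hd1', hγs s]
    simp only [cross3, PiLp.inner_apply, Fin.sum_univ_three, RCLike.inner_apply, conj_trivial,
      WithLp.equiv_symm_apply, PiLp.toLp_apply, WithLp.equiv_apply, crossProduct, LinearMap.mk₂_apply,
      Matrix.cons_val_zero, Matrix.cons_val_one, Matrix.head_cons, Matrix.cons_val_two,
      Matrix.tail_cons, PiLp.add_apply]
    ring
  refine ⟨key1, ?_, ?_⟩
  · rw [key2]
    exact abs_of_nonneg (sq_nonneg _)
  · intro hT
    rw [key2, key1, abs_of_nonneg (sq_nonneg _)]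
    exact div_self (pow_ne_zero 2 hT)
end
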